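/- arXiv:2409.04973 — 4 statements merged into one kernel-verified Lean document; each statement's English description precedes it below -/
import Mathlib

section
/- Let X be a real Banach space, p ≥ 2, σ > 0, and let θ : X → ℝ be p-convex with constant σ. Suppose ξ ∈ X* is a subgradient of θ at x ∈ X, ξ' ∈ X*, and x' ∈ X is a minimizer of the map z ↦ θ(z) − ⟨ξ', z⟩ over X. Then for every x̂ ∈ X, D_{ξ'}θ(x̂, x') − D_ξθ(x̂, x) ≤ (1 / (p* (2σ)^{p*−1})) ‖ξ' − ξ‖^{p*} + ⟨ξ' − ξ, x − x̂⟩, where p* := p/(p−1). -/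
/-- Let `X` be a real Banach space, `θ : X → ℝ` `p`-convex with constant
`σ > 0`, `p ≥ 2`.  Suppose `ξ` is a subgradient of `θ` at `x`, `ξ' ∈ X*`, and `x'` minimizes
`z ↦ θ(z) − ⟨ξ', z⟩` over `X`.  Then for every `xhat`,
`D_{ξ'}θ(xhat, x') − D_ξθ(xhat, x) ≤ (1/(p* (2σ)^(p*−1))) ‖ξ' − ξ‖^(p*) + ⟨ξ' − ξ, x − xhat⟩`,
where `p* = p/(p−1)`. -/
theorem bregman_three_point_estimate_of_pconvex
    {X : Type*} [NormedAddCommGroup X] [NormedSpace ℝ X] [CompleteSpace X]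
    (p σ : ℝ) (hp : 2 ≤ p) (hσ : 0 < σ) (θ : X → ℝ)
    (hθ : ∀ x xbar : X, ∀ t : ℝ, t ∈ Set.Icc (0:ℝ) 1 →
      θ (t • x + (1 - t) • xbar) + σ * t * (1 - t) * ‖x - xbar‖ ^ p
        ≤ t * θ x + (1 - t) * θ xbar)
    (x : X) (ξ : X →L[ℝ] ℝ) (hξ : ∀ xbar : X, θ x + ξ (xbar - x) ≤ θ xbar)
    (ξ' : X →L[ℝ] ℝ) (x' : X)
    (hx' : ∀ z : X, θ x' - ξ' x' ≤ θ z - ξ' z) :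
    ∀ xhat : X,
      (θ xhat - θ x' - ξ' (xhat - x')) - (θ xhat - θ x - ξ (xhat - x))
        ≤ (1 / ((p / (p - 1)) * (2 * σ) ^ (p / (p - 1) - 1))) * ‖ξ' - ξ‖ ^ (p / (p - 1))
          + (ξ' - ξ) (x - xhat) := by
  intro xhat
  have hp1 : (1:ℝ) < p := lt_of_lt_of_le one_lt_two hp
  have hp0 : (0:ℝ) < p := lt_trans one_pos hp1
  set q : ℝ := p / (p - 1) with hqdef
  have hconj : p.HolderConjugate q := Real.HolderConjugate.conjExponent hp1
  have hq0 : (0:ℝ) < q := hconj.symm.pos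
  set a : ℝ := ‖ξ' - ξ‖ with hadef
  set r : ℝ := ‖x' - x‖ with hrdef
  have ha0 : 0 ≤ a := norm_nonneg _
  have hr0 : 0 ≤ r := norm_nonneg _
  have h2σ : (0:ℝ) < 2 * σ := by linarith
  -- Step 1: strong subgradient inequality at x
  have hstrong : σ * r ^ p ≤ θ x' - θ x - ξ (x' - x) := by
    have key : ∀ t ∈ Set.Ioc (0:ℝ) 1,
        σ * (1 - t) * r ^ p ≤ θ x' - θ x - ξ (x' - x) := by
      intro t ht
      have ht0 : 0 < t := ht.1
      have h1 := hθ x' x t ⟨le_of_lt ht0, ht.2⟩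
      have h2 := hξ (t • x' + (1 - t) • x)
      have heq : t • x' + (1 - t) • x - x = t • (x' - x) := by
        rw [sub_smul, one_smul, smul_sub]; abel
      rw [heq, map_smul] at h2
      simp only [smul_eq_mul] at h2
      have h3 : t * (σ * (1 - t) * r ^ p) ≤ t * (θ x' - θ x - ξ (x' - x)) := by
        nlinarith [h1, h2]
      exact le_of_mul_le_mul_left h3 ht0
    have hlim : Filter.Tendsto (fun t : ℝ => σ * (1 - t) * r ^ p)
        (nhdsWithin 0 (Set.Ioi 0)) (nhds (σ * r ^ p)) := by
      have : Filter.Tendsto (fun t : ℝ => σ * (1 - t) * r ^ p)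
          (nhds 0) (nhds (σ * (1 - 0) * r ^ p)) := by
        exact ((continuous_const.mul (continuous_const.sub continuous_id)).mul
          continuous_const).tendsto 0
      simpa using this.mono_left nhdsWithin_le_nhds
    refine le_of_tendsto hlim ?_
    filter_upwards [Ioc_mem_nhdsGT_of_mem (by constructor <;> norm_num :
      (0:ℝ) ∈ Set.Ico (0:ℝ) 1)] with t ht using key t ht
  -- Step 2: pairing bound
  have hpair : (ξ' - ξ) (x' - x) ≤ a * r := by
    have h1 := (ξ' - ξ).le_opNorm (x' - x)
    have h2 : (ξ' - ξ) (x' - x) ≤ ‖(ξ' - ξ) (x' - x)‖ := le_abs_self _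
    exact h2.trans h1
  -- Step 3: Young's inequality
  set c : ℝ := (2 * σ) ^ (1 / p) with hcdef
  have hc0 : 0 < c := Real.rpow_pos_of_pos h2σ _
  have hyoung : a * r ≤ (2 * σ) / p * r ^ p + a ^ q / (q * (2 * σ) ^ (q - 1)) := by
    have h1 := Real.young_inequality_of_nonneg (mul_nonneg hc0.le hr0)
      (div_nonneg ha0 hc0.le) hconj
    have hcr : (c * r) ^ p = (2 * σ) * r ^ p := by
      rw [Real.mul_rpow hc0.le hr0, hcdef, ← Real.rpow_mul h2σ.le]
      rw [one_div_mul_cancel (ne_of_gt hp0), Real.rpow_one]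
    have hac : (a / c) ^ q = a ^ q / (2 * σ) ^ (q - 1) := by
      rw [Real.div_rpow ha0 hc0.le, hcdef, ← Real.rpow_mul h2σ.le]
      have : 1 / p * q = q - 1 := by
        have hps : p - 1 ≠ 0 := by linarith
        rw [hqdef]
        field_simp
        ring
      rw [this]
    calc a * r = (c * r) * (a / c) := by field_simp
      _ ≤ (c * r) ^ p / p + (a / c) ^ q / q := h1
      _ = (2 * σ) / p * r ^ p + a ^ q / (q * (2 * σ) ^ (q - 1)) := by
          rw [hcr, hac]; ring
  have hσr : (2 * σ) / p * r ^ p ≤ σ * r ^ p := by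
    have hrp : 0 ≤ r ^ p := Real.rpow_nonneg hr0 _
    have : (2 * σ) / p ≤ σ := by
      rw [div_le_iff₀ hp0]; nlinarith
    exact mul_le_mul_of_nonneg_right this hrp
  -- final assembly
  have hE : a ^ q / (q * (2 * σ) ^ (q - 1)) = 1 / (q * (2 * σ) ^ (q - 1)) * a ^ q := by ring
  simp only [ContinuousLinearMap.sub_apply, map_sub] at hstrong hpair ⊢
  rw [← hE]
  linarith [hstrong, hpair, hyoung, hσr]
end

section
/- Let X be a real Banach space, Y a real Hilbert space, x0 ∈ X, ρ > 0, and let F : X → Y be Fréchet differentiable on the closed ball B_{2ρ}(x0) and satisfy the tangential cone condition with constant η ∈ [0,1) on B_{2ρ}(x0). Let x̂ ∈ B_{2ρ}(x0) with F(x̂) = y, let y^δ ∈ Y with ‖y^δ − y‖ ≤ δ, and let x ∈ B_{2ρ}(x0). Then ⟪F(x) − y^δ, F'(x)(x̂ − x)⟫ ≤ ‖F(x) − y^δ‖ ((1 + η) δ + η ‖F(x) − y^δ‖) − ‖F(x) − y^δ‖². -/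
/-- Let `X` be a real Banach space, `Y` a real Hilbert space,
`F : X → Y` Fréchet differentiable on the closed ball `B_{2ρ}(x0)` and satisfying the
tangential cone condition with constant `η ∈ [0,1)` there.  If `xhat ∈ B_{2ρ}(x0)` with
`F(xhat) = y`, `‖yδ − y‖ ≤ δ`, and `x ∈ B_{2ρ}(x0)`, then
`⟪F(x) − yδ, F'(x)(xhat − x)⟫ ≤ ‖F(x) − yδ‖ ((1+η) δ + η ‖F(x) − yδ‖) − ‖F(x) − yδ‖²`. -/
theorem inner_residual_estimate_of_tangential_cone
    {X : Type*} [NormedAddCommGroup X] [NormedSpace ℝ X] [CompleteSpace X]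
    {Y : Type*} [NormedAddCommGroup Y] [InnerProductSpace ℝ Y] [CompleteSpace Y]
    (x0 : X) (ρ : ℝ) (hρ : 0 < ρ)
    (F : X → Y) (F' : X → (X →L[ℝ] Y))
    (hF : ∀ z ∈ Metric.closedBall x0 (2 * ρ), HasFDerivAt F (F' z) z)
    (η : ℝ) (hη0 : 0 ≤ η) (hη1 : η < 1)
    (hTCC : ∀ u ∈ Metric.closedBall x0 (2 * ρ), ∀ v ∈ Metric.closedBall x0 (2 * ρ),
      ‖F u - F v - F' v (u - v)‖ ≤ η * ‖F u - F v‖)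
    (xhat : X) (hxhat : xhat ∈ Metric.closedBall x0 (2 * ρ))
    (y : Y) (hsol : F xhat = y)
    (yδ : Y) (δ : ℝ) (hnoise : ‖yδ - y‖ ≤ δ)
    (x : X) (hx : x ∈ Metric.closedBall x0 (2 * ρ)) :
    (inner ℝ (F x - yδ) (F' x (xhat - x)) : ℝ)
      ≤ ‖F x - yδ‖ * ((1 + η) * δ + η * ‖F x - yδ‖) - ‖F x - yδ‖ ^ 2 := by
  set r := F x - yδ with hr
  set e := F xhat - F x - F' x (xhat - x) with he
  have hTC : ‖e‖ ≤ η * ‖F xhat - F x‖ := hTCC xhat hxhat x hx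
  have hdecomp : F' x (xhat - x) = (y - yδ) - r - e := by
    rw [he, hr, hsol]; abel
  have hr0 : (0:ℝ) ≤ ‖r‖ := norm_nonneg _
  have h1 : (inner ℝ r (y - yδ) : ℝ) ≤ ‖r‖ * δ := by
    calc (inner ℝ r (y - yδ) : ℝ) ≤ ‖r‖ * ‖y - yδ‖ := real_inner_le_norm _ _
    _ ≤ ‖r‖ * δ := by
        have : ‖y - yδ‖ = ‖yδ - y‖ := norm_sub_rev _ _
        nlinarith [hnoise]
  have h2 : (inner ℝ r (-e) : ℝ) ≤ ‖r‖ * (η * (δ + ‖r‖)) := by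
    have hb : ‖F xhat - F x‖ ≤ δ + ‖r‖ := by
      have heq : F xhat - F x = (y - yδ) - r := by rw [hsol, hr]; abel
      rw [heq]
      calc ‖(y - yδ) - r‖ ≤ ‖y - yδ‖ + ‖r‖ := norm_sub_le _ _
      _ ≤ δ + ‖r‖ := by
          have : ‖y - yδ‖ = ‖yδ - y‖ := norm_sub_rev _ _
          linarith
    calc (inner ℝ r (-e) : ℝ) ≤ ‖r‖ * ‖(-e)‖ := real_inner_le_norm _ _
    _ = ‖r‖ * ‖e‖ := by rw [norm_neg]
    _ ≤ ‖r‖ * (η * (δ + ‖r‖)) := by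
        have he2 : ‖e‖ ≤ η * (δ + ‖r‖) :=
          hTC.trans (mul_le_mul_of_nonneg_left hb hη0)
        exact mul_le_mul_of_nonneg_left he2 hr0
  have hexp : (inner ℝ r (F' x (xhat - x)) : ℝ)
      = inner ℝ r (y - yδ) - ‖r‖ ^ 2 + inner ℝ r (-e) := by
    rw [hdecomp]
    have : (y - yδ) - r - e = (y - yδ) + (-r) + (-e) := by abel
    rw [this, inner_add_right, inner_add_right, inner_neg_right,
      real_inner_self_eq_norm_sq]
    ring
  rw [hexp]
  nlinarith [h1, h2]
end

section
/- Let X be a real Banach space, Y a real Hilbert space, p ≥ 2, σ > 0, and let θ : X → ℝ be p-convex with constant σ. Let x0 ∈ X, ρ > 0, and let F : X → Y be Fréchet differentiable on B_{2ρ}(x0) satisfying the tangential cone condition with constant η ∈ [0,1). Let x̂ ∈ B_{2ρ}(x0) with F(x̂) = y, let ‖y^δ − y‖ ≤ δ, and let τ > 1, μ0 > 0. Suppose x ∈ B_{2ρ}(x0), ξ ∈ ∂θ(x), ‖F(x) − y^δ‖ ≥ τ δ, and set g := F'(x)*(F(x) − y^δ) ∈ X*. Let t ≥ 0 satisfy t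 ‖g‖^p ≤ μ0 ‖F(x) − y^δ‖^{2(p−1)}, let ξ' := ξ − t g, and let x' be a minimizer of z ↦ θ(z) − ⟨ξ', z⟩ over X. Then D_{ξ'}θ(x̂, x') ≤ D_ξθ(x̂, x) − c0 t ‖F(x) − y^δ‖², where c0 := 1 − η − (1 + η)/τ − ((p−1)/p) (μ0/(2σ))^{1/(p−1)}. -/
set_option maxHeartbeats 1600000 in
/-- One-step descent estimate for the SGD-θ update (Hilbert data, general
`p`-convex penalty):  under the tangential cone condition with constant `η ∈ [0,1)`, if
`xhat ∈ B_{2ρ}(x0)` solves `F(xhat) = y`, `‖yδ − y‖ ≤ δ`, `x ∈ B_{2ρ}(x0)`, `ξ ∈ ∂θ(x)`,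
`‖F(x) − yδ‖ ≥ τ δ`, `g = F'(x)*(F(x) − yδ)`, `t ≥ 0` with `t ‖g‖^p ≤ μ0 ‖F(x) − yδ‖^{2(p−1)}`,
`ξ' = ξ − t g` and `x'` minimizes `z ↦ θ(z) − ⟨ξ', z⟩`, then
`D_{ξ'}θ(xhat, x') ≤ D_ξθ(xhat, x) − c0 t ‖F(x) − yδ‖²` with
`c0 = 1 − η − (1+η)/τ − ((p−1)/p)(μ0/(2σ))^{1/(p−1)}`. -/
theorem sgd_one_step_descent_pconvex
    {X : Type*} [NormedAddCommGroup X] [NormedSpace ℝ X] [CompleteSpace X]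
    {Y : Type*} [NormedAddCommGroup Y] [InnerProductSpace ℝ Y] [CompleteSpace Y]
    (p σ : ℝ) (hp : 2 ≤ p) (hσ : 0 < σ) (θ : X → ℝ)
    (hθ : ∀ u v : X, ∀ s : ℝ, s ∈ Set.Icc (0:ℝ) 1 →
      θ (s • u + (1 - s) • v) + σ * s * (1 - s) * ‖u - v‖ ^ p
        ≤ s * θ u + (1 - s) * θ v)
    (x0 : X) (ρ : ℝ) (hρ : 0 < ρ)
    (F : X → Y) (F' : X → (X →L[ℝ] Y))
    (hF : ∀ z ∈ Metric.closedBall x0 (2 * ρ), HasFDerivAt F (F' z) z)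
    (η : ℝ) (hη0 : 0 ≤ η) (hη1 : η < 1)
    (hTCC : ∀ u ∈ Metric.closedBall x0 (2 * ρ), ∀ v ∈ Metric.closedBall x0 (2 * ρ),
      ‖F u - F v - F' v (u - v)‖ ≤ η * ‖F u - F v‖)
    (xhat : X) (hxhat : xhat ∈ Metric.closedBall x0 (2 * ρ))
    (y : Y) (hsol : F xhat = y)
    (yδ : Y) (δ : ℝ) (hnoise : ‖yδ - y‖ ≤ δ)
    (τ μ0 : ℝ) (hτ : 1 < τ) (hμ0 : 0 < μ0)
    (x : X) (hx : x ∈ Metric.closedBall x0 (2 * ρ))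
    (ξ : X →L[ℝ] ℝ) (hξ : ∀ z : X, θ x + ξ (z - x) ≤ θ z)
    (hdisc : τ * δ ≤ ‖F x - yδ‖)
    (g : X →L[ℝ] ℝ) (hg : ∀ v : X, g v = (inner ℝ (F x - yδ) (F' x v) : ℝ))
    (t : ℝ) (ht0 : 0 ≤ t)
    (ht : t * ‖g‖ ^ p ≤ μ0 * ‖F x - yδ‖ ^ (2 * (p - 1)))
    (ξ' : X →L[ℝ] ℝ) (hξ' : ξ' = ξ - t • g)
    (x' : X) (hx' : ∀ z : X, θ x' - ξ' x' ≤ θ z - ξ' z)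
    (c0 : ℝ)
    (hc0 : c0 = 1 - η - (1 + η) / τ - ((p - 1) / p) * (μ0 / (2 * σ)) ^ (1 / (p - 1))) :
    θ xhat - θ x' - ξ' (xhat - x')
      ≤ θ xhat - θ x - ξ (xhat - x) - c0 * t * ‖F x - yδ‖ ^ 2 := by
  have hp1 : (1:ℝ) < p := by linarith
  have hp0 : (0:ℝ) < p := by linarith
  have hpm1 : (0:ℝ) < p - 1 := by linarith
  have hδ0 : (0:ℝ) ≤ δ := le_trans (norm_nonneg _) hnoise
  have hτ0 : (0:ℝ) < τ := by linarith
  set R : ℝ := ‖F x - yδ‖ with hRdef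
  have hR0 : (0:ℝ) ≤ R := norm_nonneg _
  -- Step 1: strong convexity lower bound on the Bregman distance
  have hstrong : σ * ‖x' - x‖ ^ p ≤ θ x' - θ x - ξ (x' - x) := by
    have key : ∀ s : ℝ, s ∈ Set.Ioo (0:ℝ) 1 →
        σ * (1 - s) * ‖x' - x‖ ^ p ≤ θ x' - θ x - ξ (x' - x) := by
      intro s hs
      have h1 := hθ x' x s ⟨hs.1.le, hs.2.le⟩
      have h2 := hξ (s • x' + (1 - s) • x)
      have heq : s • x' + (1 - s) • x - x = s • (x' - x) := by
        rw [smul_sub, sub_smul, one_smul]; abel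
      rw [heq] at h2
      have h3 : ξ (s • (x' - x)) = s * ξ (x' - x) := by
        rw [map_smul]; rfl
      rw [h3] at h2
      rw [← mul_le_mul_iff_right₀ hs.1]
      nlinarith [h1, h2]
    have htend : Filter.Tendsto (fun s : ℝ => σ * (1 - s) * ‖x' - x‖ ^ p)
        (nhdsWithin 0 (Set.Ioi 0)) (nhds (σ * (1 - 0) * ‖x' - x‖ ^ p)) := by
      apply Filter.Tendsto.mono_left _ nhdsWithin_le_nhds
      exact Continuous.tendsto (by fun_prop) 0
    have hev : ∀ᶠ s in nhdsWithin (0:ℝ) (Set.Ioi 0),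
        σ * (1 - s) * ‖x' - x‖ ^ p ≤ θ x' - θ x - ξ (x' - x) :=
      Filter.eventually_of_mem (Ioo_mem_nhdsGT_of_mem ⟨le_refl 0, one_pos⟩)
        (fun s hs => key s hs)
    have := le_of_tendsto htend hev
    simpa using this
  -- Step 2: bound on g (xhat - x) via TCC
  have hgx : g (xhat - x) ≤ -((1 - η - (1 + η) / τ) * R ^ 2) := by
    have hE := hTCC xhat hxhat x hx
    have h1 : g (xhat - x) = (inner ℝ (F x - yδ) (F' x (xhat - x)) : ℝ) := hg _
    set E : Y := F xhat - F x - F' x (xhat - x) with hEdef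
    have hsplit : (F' x (xhat - x) : Y) = (F xhat - F x) - E := by
      rw [hEdef]; abel
    have h2 : (inner ℝ (F x - yδ) (F' x (xhat - x)) : ℝ)
        = inner ℝ (F x - yδ) (F xhat - F x) - inner ℝ (F x - yδ) E := by
      rw [hsplit, inner_sub_right]
    have hyFx : (F xhat - F x : Y) = -(F x - yδ) + (y - yδ) := by
      rw [hsol]; abel
    have h3 : (inner ℝ (F x - yδ) (F xhat - F x) : ℝ)
        = -(R ^ 2) + inner ℝ (F x - yδ) (y - yδ) := by
      rw [hyFx, inner_add_right, inner_neg_right, real_inner_self_eq_norm_sq]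
    have h4 : (inner ℝ (F x - yδ) (y - yδ) : ℝ) ≤ R * δ := by
      have h41 : (inner ℝ (F x - yδ) (y - yδ) : ℝ) ≤ ‖F x - yδ‖ * ‖y - yδ‖ :=
        real_inner_le_norm _ _
      have h43 : ‖y - yδ‖ ≤ δ := by rw [norm_sub_rev]; exact hnoise
      calc (inner ℝ (F x - yδ) (y - yδ) : ℝ) ≤ R * ‖y - yδ‖ := h41
        _ ≤ R * δ := mul_le_mul_of_nonneg_left h43 hR0
    have h6 : ‖F xhat - F x‖ ≤ δ + R := by
      rw [hyFx]
      have h61 : ‖(-(F x - yδ) + (y - yδ) : Y)‖ ≤ ‖(-(F x - yδ) : Y)‖ + ‖y - yδ‖ :=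
        norm_add_le _ _
      have h62 : ‖y - yδ‖ ≤ δ := by rw [norm_sub_rev]; exact hnoise
      rw [norm_neg] at h61
      linarith
    have h5 : -(inner ℝ (F x - yδ) E : ℝ) ≤ R * (η * (δ + R)) := by
      have h51 : -(inner ℝ (F x - yδ) E : ℝ) ≤ R * ‖E‖ := by
        calc -(inner ℝ (F x - yδ) E : ℝ) ≤ |(inner ℝ (F x - yδ) E : ℝ)| := neg_le_abs _
          _ ≤ ‖F x - yδ‖ * ‖E‖ := abs_real_inner_le_norm _ _
      have h53 : ‖E‖ ≤ η * (δ + R) := le_trans hE (mul_le_mul_of_nonneg_left h6 hη0)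
      calc -(inner ℝ (F x - yδ) E : ℝ) ≤ R * ‖E‖ := h51
        _ ≤ R * (η * (δ + R)) := mul_le_mul_of_nonneg_left h53 hR0
    have hcomb : g (xhat - x) ≤ -(R ^ 2) + R * δ + R * (η * (δ + R)) := by
      rw [h1, h2, h3]; linarith
    have hδle : δ ≤ R / τ := by
      rw [le_div_iff₀ hτ0]; linarith
    have hRδ : R * δ ≤ R ^ 2 / τ := by
      have := mul_le_mul_of_nonneg_left hδle hR0
      calc R * δ ≤ R * (R / τ) := this
        _ = R ^ 2 / τ := by ring
    have hRδ2 : R * (η * δ) ≤ η * (R ^ 2 / τ) := by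
      have := mul_le_mul_of_nonneg_left
        (mul_le_mul_of_nonneg_left hδle hη0) hR0
      calc R * (η * δ) ≤ R * (η * (R / τ)) := this
        _ = η * (R ^ 2 / τ) := by ring
    have hexp : R * (η * (δ + R)) = R * (η * δ) + η * R ^ 2 := by ring
    have hexp2 : -((1 - η - (1 + η) / τ) * R ^ 2)
        = -(R ^ 2) + η * R ^ 2 + R ^ 2 / τ + η * (R ^ 2 / τ) := by
      field_simp; ring
    linarith [hcomb, hRδ, hRδ2]
  -- Step 3: Young's inequality bound
  have hyoung : t * ‖g‖ * ‖x' - x‖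
      ≤ σ * ‖x' - x‖ ^ p
        + (p - 1) / p * (μ0 / (2 * σ)) ^ (1 / (p - 1)) * (t * R ^ 2) := by
    rcases eq_or_lt_of_le ht0 with h | htpos
    · rw [← h]
      have h1 : (0:ℝ) * ‖g‖ * ‖x' - x‖ = 0 := by ring
      have h2 : (0:ℝ) ≤ σ * ‖x' - x‖ ^ p := by positivity
      have h3 : (0:ℝ) ≤ (p - 1) / p * (μ0 / (2 * σ)) ^ (1 / (p - 1)) * ((0:ℝ) * R ^ 2) := by
        positivity
      linarith
    · set q : ℝ := p / (p - 1) with hqdef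
      have hq : Real.HolderConjugate p q := by
        exact (Real.holderConjugate_iff_eq_conjExponent hp1).2 hqdef
      have hq0 : (0:ℝ) < q := by
        rw [hqdef]; positivity
      have hpσ : (0:ℝ) < p * σ := mul_pos hp0 hσ
      set c : ℝ := (p * σ) ^ (1 / p) with hcdef
      have hcpos : (0:ℝ) < c := Real.rpow_pos_of_pos hpσ _
      have ha0 : (0:ℝ) ≤ c * ‖x' - x‖ := by positivity
      have hb0 : (0:ℝ) ≤ t * ‖g‖ / c := by positivity
      have hY := Real.young_inequality_of_nonneg ha0 hb0 hq
      have hab : (c * ‖x' - x‖) * (t * ‖g‖ / c) = t * ‖g‖ * ‖x' - x‖ := by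
        field_simp
      rw [hab] at hY
      have hap : (c * ‖x' - x‖) ^ p / p = σ * ‖x' - x‖ ^ p := by
        rw [Real.mul_rpow hcpos.le (norm_nonneg _)]
        have hcp : c ^ p = p * σ := by
          rw [hcdef, ← Real.rpow_mul hpσ.le, one_div_mul_cancel hp0.ne', Real.rpow_one]
        rw [hcp]
        field_simp
      have htp : t ^ (p - 1) * t = t ^ p := by
        rw [Real.rpow_sub htpos, Real.rpow_one, div_mul_cancel₀ _ htpos.ne']
      have e2 : (t * ‖g‖) ^ p = t ^ (p - 1) * (t * ‖g‖ ^ p) := by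
        rw [Real.mul_rpow ht0 (norm_nonneg _), ← htp]; ring
      have e3 : (t * ‖g‖) ^ p ≤ t ^ (p - 1) * (μ0 * R ^ (2 * (p - 1))) := by
        rw [e2]
        exact mul_le_mul_of_nonneg_left ht (Real.rpow_nonneg ht0 _)
      have htg : (t * ‖g‖) ^ q ≤ t * μ0 ^ (1 / (p - 1)) * R ^ 2 := by
        have e1 : (t * ‖g‖) ^ q = ((t * ‖g‖) ^ p) ^ (1 / (p - 1)) := by
          rw [← Real.rpow_mul (by positivity)]
          congr 1
          rw [hqdef]; field_simp
        have e4 : (t ^ (p - 1) * (μ0 * R ^ (2 * (p - 1)))) ^ (1 / (p - 1))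
            = t * μ0 ^ (1 / (p - 1)) * R ^ 2 := by
          rw [Real.mul_rpow (Real.rpow_nonneg ht0 _) (by positivity),
              Real.mul_rpow hμ0.le (Real.rpow_nonneg hR0 _),
              ← Real.rpow_mul ht0, ← Real.rpow_mul hR0,
              mul_one_div_cancel hpm1.ne']
          rw [Real.rpow_one]
          have h24 : 2 * (p - 1) * (1 / (p - 1)) = 2 := by field_simp
          rw [h24, show ((2:ℝ)) = ((2:ℕ):ℝ) by norm_num, Real.rpow_natCast]
          ring
        calc (t * ‖g‖) ^ q = ((t * ‖g‖) ^ p) ^ (1 / (p - 1)) := e1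
          _ ≤ (t ^ (p - 1) * (μ0 * R ^ (2 * (p - 1)))) ^ (1 / (p - 1)) :=
              Real.rpow_le_rpow (by positivity) e3 (by positivity)
          _ = t * μ0 ^ (1 / (p - 1)) * R ^ 2 := e4
      have hcq : c ^ q = (p * σ) ^ (1 / (p - 1)) := by
        rw [hcdef, ← Real.rpow_mul hpσ.le]
        congr 1
        rw [hqdef]; field_simp
      have hbq : (t * ‖g‖ / c) ^ q / q
          ≤ (p - 1) / p * (μ0 / (2 * σ)) ^ (1 / (p - 1)) * (t * R ^ 2) := by
        rw [Real.div_rpow (by positivity) hcpos.le, hcq]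
        have hden : (0:ℝ) < (p * σ) ^ (1 / (p - 1)) := Real.rpow_pos_of_pos hpσ _
        have step1 : (t * ‖g‖) ^ q / (p * σ) ^ (1 / (p - 1)) / q
            ≤ (t * μ0 ^ (1 / (p - 1)) * R ^ 2) / (p * σ) ^ (1 / (p - 1)) / q := by
          gcongr
        have hqinv : 1 / q = (p - 1) / p := by
          rw [hqdef, one_div_div]
        have step2 : (t * μ0 ^ (1 / (p - 1)) * R ^ 2) / (p * σ) ^ (1 / (p - 1)) / q
            = (p - 1) / p * ((μ0 / (p * σ)) ^ (1 / (p - 1))) * (t * R ^ 2) := by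
          rw [Real.div_rpow hμ0.le hpσ.le, ← hqinv]
          field_simp
        have hmono : (μ0 / (p * σ)) ^ (1 / (p - 1)) ≤ (μ0 / (2 * σ)) ^ (1 / (p - 1)) := by
          apply Real.rpow_le_rpow (by positivity) _ (by positivity)
          gcongr <;> nlinarith
        have step3 : (p - 1) / p * ((μ0 / (p * σ)) ^ (1 / (p - 1))) * (t * R ^ 2)
            ≤ (p - 1) / p * ((μ0 / (2 * σ)) ^ (1 / (p - 1))) * (t * R ^ 2) := by
          have h1 : (0:ℝ) ≤ (p - 1) / p := by positivity
          have h2 : (0:ℝ) ≤ t * R ^ 2 := by positivity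
          exact mul_le_mul_of_nonneg_right (mul_le_mul_of_nonneg_left hmono h1) h2
        calc (t * ‖g‖) ^ q / (p * σ) ^ (1 / (p - 1)) / q
            ≤ (t * μ0 ^ (1 / (p - 1)) * R ^ 2) / (p * σ) ^ (1 / (p - 1)) / q := step1
          _ = (p - 1) / p * ((μ0 / (p * σ)) ^ (1 / (p - 1))) * (t * R ^ 2) := step2
          _ ≤ (p - 1) / p * ((μ0 / (2 * σ)) ^ (1 / (p - 1))) * (t * R ^ 2) := step3
      linarith [hY, hap.le, hap.ge, hbq]
  -- Step 4: assemble
  have hgnorm : g (x - x') ≤ ‖g‖ * ‖x' - x‖ := by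
    calc g (x - x') ≤ |g (x - x')| := le_abs_self _
      _ = ‖g (x - x')‖ := rfl
      _ ≤ ‖g‖ * ‖x - x'‖ := g.le_opNorm _
      _ = ‖g‖ * ‖x' - x‖ := by rw [norm_sub_rev]
  have htg2 : t * g (x - x') ≤ t * (‖g‖ * ‖x' - x‖) :=
    mul_le_mul_of_nonneg_left hgnorm ht0
  have htg1 : t * g (xhat - x) ≤ t * (-((1 - η - (1 + η) / τ) * R ^ 2)) :=
    mul_le_mul_of_nonneg_left hgx ht0
  have happ1 : ξ' (xhat - x') = ξ (xhat - x') - t * g (xhat - x') := by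
    rw [hξ']
    simp [ContinuousLinearMap.sub_apply, ContinuousLinearMap.smul_apply, smul_eq_mul]
  have hc0' : c0 * t * R ^ 2
      = (1 - η - (1 + η) / τ) * (t * R ^ 2)
        - (p - 1) / p * (μ0 / (2 * σ)) ^ (1 / (p - 1)) * (t * R ^ 2) := by
    rw [hc0]; ring
  have eg : g (xhat - x') = g (xhat - x) + g (x - x') := by
    rw [← map_add]
    congr 1
    abel
  have eξ : ξ (xhat - x') = ξ (xhat - x) - ξ (x' - x) := by
    rw [← map_sub]
    congr 1
    abel
  rw [happ1, hc0', eg, eξ]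
  have hmul : t * (g (xhat - x) + g (x - x')) = t * g (xhat - x) + t * g (x - x') := by
    ring
  nlinarith [hstrong, htg1, htg2, hyoung, hmul]
end

section
/- One-step descent inequality for the 2-convex, Hilbert-data case: let X be a real Banach space, Y a real Hilbert space, σ > 0, and θ : X → ℝ 2-convex with constant σ. Let x0 ∈ X, ρ > 0, and let F : X → Y be Fréchet differentiable on B_{2ρ}(x0) satisfying the tangential cone condition with constant η ∈ [0,1). Let x̂ ∈ B_{2ρ}(x0) with F(x̂) = y and ‖y^δ − y‖ ≤ δ. Suppose x ∈ B_{2ρ}(x0), ξ ∈ ∂θ(x), set g := F'(x)*(F(x) − y^δ) ∈ X*, and let t ≥ 0 satisfy t ‖g‖² ≤ μ0 ‖F(x) − y^δ‖² for some μ0 > 0. Let ξ' := ξ − t g and let x' be a minimizer of z ↦ θ(z) − ⟨ξ', z⟩ over X. Then D_{ξ'}θ(x̂, x') − D_ξθ(x̂, x) ≤ −(1 − η − μ0/(4σ)) t ‖F(x) − y^δ‖² + (1 + η) t ‖F(x) − y^δ‖ δ. -/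
set_option maxHeartbeats 1000000 in
/-- One-step descent inequality for the 2-convex, Hilbert-data case:
with `θ` 2-convex with constant `σ`, `F` Fréchet differentiable on `B_{2ρ}(x0)` satisfying the
tangential cone condition with constant `η ∈ [0,1)`, `xhat ∈ B_{2ρ}(x0)` solving `F(xhat) = y`,
`‖yδ − y‖ ≤ δ`, `x ∈ B_{2ρ}(x0)`, `ξ ∈ ∂θ(x)`, `g = F'(x)*(F(x) − yδ)`, `t ≥ 0` with
`t ‖g‖² ≤ μ0 ‖F(x) − yδ‖²`, `ξ' = ξ − t g` and `x'` a minimizer of `z ↦ θ(z) − ⟨ξ', z⟩`: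
`D_{ξ'}θ(xhat, x') − D_ξθ(xhat, x)
  ≤ −(1 − η − μ0/(4σ)) t ‖F(x) − yδ‖² + (1+η) t ‖F(x) − yδ‖ δ`. -/
theorem sgd_one_step_descent_two_convex
    {X : Type*} [NormedAddCommGroup X] [NormedSpace ℝ X] [CompleteSpace X]
    {Y : Type*} [NormedAddCommGroup Y] [InnerProductSpace ℝ Y] [CompleteSpace Y]
    (σ : ℝ) (hσ : 0 < σ) (θ : X → ℝ)
    (hθ : ∀ u v : X, ∀ s : ℝ, s ∈ Set.Icc (0:ℝ) 1 →
      θ (s • u + (1 - s) • v) + σ * s * (1 - s) * ‖u - v‖ ^ 2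
        ≤ s * θ u + (1 - s) * θ v)
    (x0 : X) (ρ : ℝ) (hρ : 0 < ρ)
    (F : X → Y) (F' : X → (X →L[ℝ] Y))
    (hF : ∀ z ∈ Metric.closedBall x0 (2 * ρ), HasFDerivAt F (F' z) z)
    (η : ℝ) (hη0 : 0 ≤ η) (hη1 : η < 1)
    (hTCC : ∀ u ∈ Metric.closedBall x0 (2 * ρ), ∀ v ∈ Metric.closedBall x0 (2 * ρ),
      ‖F u - F v - F' v (u - v)‖ ≤ η * ‖F u - F v‖)
    (xhat : X) (hxhat : xhat ∈ Metric.closedBall x0 (2 * ρ))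
    (y : Y) (hsol : F xhat = y)
    (yδ : Y) (δ : ℝ) (hnoise : ‖yδ - y‖ ≤ δ)
    (μ0 : ℝ) (hμ0 : 0 < μ0)
    (x : X) (hx : x ∈ Metric.closedBall x0 (2 * ρ))
    (ξ : X →L[ℝ] ℝ) (hξ : ∀ z : X, θ x + ξ (z - x) ≤ θ z)
    (g : X →L[ℝ] ℝ) (hg : ∀ v : X, g v = (inner ℝ (F x - yδ) (F' x v) : ℝ))
    (t : ℝ) (ht0 : 0 ≤ t)
    (ht : t * ‖g‖ ^ 2 ≤ μ0 * ‖F x - yδ‖ ^ 2)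
    (ξ' : X →L[ℝ] ℝ) (hξ' : ξ' = ξ - t • g)
    (x' : X) (hx' : ∀ z : X, θ x' - ξ' x' ≤ θ z - ξ' z) :
    (θ xhat - θ x' - ξ' (xhat - x')) - (θ xhat - θ x - ξ (xhat - x))
      ≤ -(1 - η - μ0 / (4 * σ)) * t * ‖F x - yδ‖ ^ 2
        + (1 + η) * t * ‖F x - yδ‖ * δ := by
  have hδ0 : 0 ≤ δ := le_trans (norm_nonneg _) hnoise
  set b : Y := F x - yδ with hb
  set n : ℝ := ‖b‖ with hn
  have hn0 : 0 ≤ n := norm_nonneg _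
  -- Step A : strong convexity of the Bregman distance
  have hA : σ * ‖x' - x‖ ^ 2 ≤ θ x' - θ x - ξ (x' - x) := by
    set c := ‖x' - x‖ ^ 2 with hc
    have hc0 : 0 ≤ c := sq_nonneg _
    have hD0 : 0 ≤ θ x' - θ x - ξ (x' - x) := by
      have := hξ x'; linarith
    have key : ∀ s : ℝ, 0 < s → s ≤ 1 →
        σ * (1 - s) * c ≤ θ x' - θ x - ξ (x' - x) := by
      intro s hs0 hs1
      have h1 := hθ x' x s ⟨le_of_lt hs0, hs1⟩
      have h2 := hξ (s • x' + (1 - s) • x)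
      have h3 : ξ (s • x' + (1 - s) • x - x) = s * ξ (x' - x) := by
        have e : s • x' + (1 - s) • x - x = s • (x' - x) := by module
        rw [e, map_smul]; rfl
      rw [h3] at h2
      have h4 : s * (ξ (x' - x) + σ * (1 - s) * c) ≤ s * (θ x' - θ x) := by
        simp only [hc]; nlinarith [h1, h2]
      have h5 := (mul_le_mul_iff_right₀ hs0).mp h4
      linarith
    by_contra hcon
    push_neg at hcon
    set D := θ x' - θ x - ξ (x' - x) with hD
    have hcpos : 0 < c := by nlinarith
    have hσc : 0 < σ * c := mul_pos hσ hcpos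
    set s : ℝ := (σ * c - D) / (2 * σ * c) with hs
    have hs0 : 0 < s := div_pos (by linarith) (by linarith)
    have hs1 : s ≤ 1 := by
      rw [hs, div_le_one (by linarith)]; linarith
    have hk := key s hs0 hs1
    have hsc : σ * s * c = (σ * c - D) / 2 := by
      rw [hs]; field_simp
    have hexp : σ * (1 - s) * c = σ * c - σ * s * c := by ring
    rw [hexp, hsc] at hk
    linarith
  -- rewrite the difference of Bregman distances
  have hID : (θ xhat - θ x' - ξ' (xhat - x')) - (θ xhat - θ x - ξ (xhat - x))
      = -(θ x' - θ x - ξ (x' - x)) + t * g (xhat - x) - t * g (x' - x) := by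
    rw [hξ']
    simp only [ContinuousLinearMap.sub_apply, ContinuousLinearMap.smul_apply, smul_eq_mul]
    have e1 : ξ (xhat - x) - ξ (xhat - x') = ξ (x' - x) := by
      rw [← map_sub]; congr 1; abel
    have e2 : g (xhat - x') = g (xhat - x) - g (x' - x) := by
      rw [← map_sub]; congr 1; abel
    rw [e2]
    linarith [e1]
  -- operator norm bound
  have hgq : -(t * g (x' - x)) ≤ t * (‖g‖ * ‖x' - x‖) := by
    have h1 := g.le_opNorm (x' - x)
    rw [Real.norm_eq_abs] at h1
    have h2 : -(‖g‖ * ‖x' - x‖) ≤ g (x' - x) := (abs_le.mp h1).1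
    nlinarith
  -- combine with Young's inequality and the stepsize bound
  have h4σ : (0:ℝ) < 4 * σ := by linarith
  have htt : t * (t * ‖g‖ ^ 2) ≤ t * (μ0 * n ^ 2) := mul_le_mul_of_nonneg_left ht ht0
  have hkey : 4 * σ * (-(θ x' - θ x - ξ (x' - x)) - t * g (x' - x)) ≤ μ0 * t * n ^ 2 := by
    nlinarith [mul_le_mul_of_nonneg_left hA (le_of_lt h4σ),
      mul_le_mul_of_nonneg_left hgq (le_of_lt h4σ), htt,
      sq_nonneg (t * ‖g‖ - 2 * σ * ‖x' - x‖)]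
  have hcomb : -(θ x' - θ x - ξ (x' - x)) - t * g (x' - x) ≤ μ0 / (4 * σ) * (t * n ^ 2) := by
    rw [div_mul_eq_mul_div, le_div_iff₀ h4σ]
    linarith [hkey]
  -- the gradient step estimate
  have hgx : g (xhat - x) ≤ -(1 - η) * n ^ 2 + (1 + η) * n * δ := by
    have hw := hTCC xhat hxhat x hx
    rw [hsol] at hw
    have hyn : ‖y - F x‖ ≤ n + δ := by
      calc ‖y - F x‖ = ‖-(F x - yδ) + (y - yδ)‖ := by congr 1; abel
        _ ≤ ‖-(F x - yδ)‖ + ‖y - yδ‖ := norm_add_le _ _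
        _ ≤ n + δ := by
            rw [norm_neg, norm_sub_rev y yδ]
            exact add_le_add le_rfl hnoise
    rw [hg]
    have hinner : (inner ℝ b (F' x (xhat - x)) : ℝ)
        = (inner ℝ b (F' x (xhat - x) - (y - F x)) : ℝ) + (inner ℝ b (yδ - F x) : ℝ)
          + (inner ℝ b (y - yδ) : ℝ) := by
      rw [← inner_add_right, ← inner_add_right]
      congr 1
      abel
    have h1 : (inner ℝ b (F' x (xhat - x) - (y - F x)) : ℝ) ≤ n * (η * (n + δ)) := by
      calc (inner ℝ b (F' x (xhat - x) - (y - F x)) : ℝ)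
          ≤ n * ‖F' x (xhat - x) - (y - F x)‖ := real_inner_le_norm _ _
        _ ≤ n * (η * (n + δ)) := by
            apply mul_le_mul_of_nonneg_left _ hn0
            have e : ‖F' x (xhat - x) - (y - F x)‖ = ‖y - F x - F' x (xhat - x)‖ := by
              rw [← norm_neg]; congr 1; abel
            rw [e]
            exact hw.trans (mul_le_mul_of_nonneg_left hyn hη0)
    have h2 : (inner ℝ b (yδ - F x) : ℝ) = -n ^ 2 := by
      have e : yδ - F x = -b := by rw [hb]; abel
      rw [e, inner_neg_right, real_inner_self_eq_norm_sq]
    have h3 : (inner ℝ b (y - yδ) : ℝ) ≤ n * δ := by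
      calc (inner ℝ b (y - yδ) : ℝ) ≤ n * ‖y - yδ‖ := real_inner_le_norm _ _
        _ ≤ n * δ := mul_le_mul_of_nonneg_left (by rw [norm_sub_rev]; exact hnoise) hn0
    nlinarith [h1, h2, h3, hinner]
  have hgx' : t * g (xhat - x) ≤ t * (-(1 - η) * n ^ 2 + (1 + η) * n * δ) :=
    mul_le_mul_of_nonneg_left hgx ht0
  rw [hID]
  nlinarith [hcomb, hgx']
end
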